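/- Let β₁, β₂ be lists of natural numbers and b a natural number such that β = β₁ ++ [b] ++ β₂ is sorted in non-increasing order. Let γ be any finite list of natural numbers each of whose entries is strictly less than b, and let α be the list obtained by sorting β₁ ++ γ ++ β₂ into non-increasing order. Then α is strictly smaller than β in the lexicographic order List.Lex (· < ·). -/

import Mathlib

private theorem aux_lex (b : ℕ) (γ : List ℕ) (hγ : ∀ x ∈ γ, x < b) :
    ∀ (α β₂ : List ℕ), α.Pairwise (· ≥ ·) → β₂.Pairwise (· ≥ ·) →
    (∀ x ∈ β₂, x ≤ b) → α.Perm (γ ++ β₂) → List.Lex (· < ·) α (b :: β₂)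
  | [], β₂, _, _, _, _ => List.Lex.nil
  | a :: α', β₂, hα, hβ₂, hβ₂b, hperm => by
    have ha : a ∈ γ ++ β₂ := hperm.mem_iff.mp (List.mem_cons_self)
    rcases List.mem_append.mp ha with h | h
    · exact List.Lex.rel (hγ a h)
    · have hab : a ≤ b := hβ₂b a h
      rcases lt_or_eq_of_le hab with hlt | heq
      · exact List.Lex.rel hlt
      · subst heq
        rcases β₂ with _ | ⟨c, β₂'⟩
        · exact absurd h List.not_mem_nil
        · have hc1 : c ≤ a := hβ₂b c (List.mem_cons_self)
          have hc2 : a ≤ c := by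
            rcases List.mem_cons.mp h with rfl | h'
            · exact le_refl a
            · exact (List.pairwise_cons.mp hβ₂).1 a h'
          have hca : c = a := le_antisymm hc1 hc2
          subst hca
          have hperm' : α'.Perm (γ ++ β₂') := by
            have : (γ ++ c :: β₂').Perm (c :: (γ ++ β₂')) := List.perm_middle
            exact (hperm.trans this).cons_inv
          exact List.Lex.cons (aux_lex c γ hγ α' β₂' (List.pairwise_cons.mp hα).2
            (List.pairwise_cons.mp hβ₂).2 (fun x hx => hβ₂b x (List.mem_cons_of_mem _ hx)) hperm')

theorem replace_entry_lex_lt (β₁ β₂ γ : List ℕ) (b : ℕ)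
    (hβ : (β₁ ++ [b] ++ β₂).Pairwise (· ≥ ·))
    (hγ : ∀ x ∈ γ, x < b)
    (α : List ℕ) (hα : α.Pairwise (· ≥ ·)) (hperm : α.Perm (β₁ ++ γ ++ β₂)) :
    List.Lex (· < ·) α (β₁ ++ [b] ++ β₂) := by
  induction β₁ generalizing α with
  | nil =>
    simp only [List.nil_append] at hβ hperm ⊢
    exact aux_lex b γ hγ α β₂ hα (List.pairwise_cons.mp hβ).2
      (fun x hx => (List.pairwise_cons.mp hβ).1 x hx) hperm
  | cons c β₁' ih =>
    simp only [List.cons_append] at hβ hperm ⊢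
    obtain ⟨hc, hβ'⟩ := List.pairwise_cons.mp hβ
    have hcb : b ≤ c := hc b (by simp)
    have hcmem : c ∈ α := hperm.mem_iff.mpr (by simp)
    rcases α with _ | ⟨a, α'⟩
    · exact absurd hcmem List.not_mem_nil
    · have hac : a = c := by
        have h1 : a ≤ c := by
          have := hperm.mem_iff.mp (List.mem_cons_self)
          rcases List.mem_cons.mp this with rfl | h'
          · exact le_refl a
          · rcases List.mem_append.mp h' with h2 | h2
            · rcases List.mem_append.mp h2 with h3 | h3
              · exact hc a (by simp [h3])
              · exact le_of_lt (lt_of_lt_of_le (hγ a h3) hcb)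
            · exact hc a (by simp [h2])
        have h2 : c ≤ a := by
          rcases List.mem_cons.mp hcmem with heq | h'
          · exact le_of_eq heq
          · exact (List.pairwise_cons.mp hα).1 c h'
        exact le_antisymm h1 h2
      subst hac
      have hperm' : α'.Perm (β₁' ++ γ ++ β₂) := hperm.cons_inv
      exact List.Lex.cons (ih hβ' α' (List.pairwise_cons.mp hα).2 hperm')
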